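/- Let d_n = det(b_{i+j})_{i,j=0}^{n-1}. Then d_n = (-1)^(n choose 2) · x^{2·a(n)}, where a(n) = Σ_{j=0}^{n-1} s₂(j) and s₂(j) is the number of 1's in the binary expansion of j. -/

import Mathlib

def tp (n : ℕ) : ℕ := 2 ^ Nat.clog 2 n

lemma tp_ge (n : ℕ) : n ≤ tp n := Nat.le_pow_clog (by norm_num) n

lemma tp_lt {n : ℕ} (hn : 1 ≤ n) : tp n < 2 * n := by
  rcases Nat.lt_or_ge n 2 with h | h
  · interval_cases n
    simp [tp]
  · have h1 : 1 ≤ Nat.clog 2 n := Nat.clog_pos (by norm_num) h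
    have h2 : 2 ^ (Nat.clog 2 n - 1) < n := Nat.pow_pred_clog_lt_self (by norm_num) h
    have : tp n = 2 * 2 ^ (Nat.clog 2 n - 1) := by
      unfold tp
      rw [← pow_succ']
      congr 1
      omega
    omega

lemma tp_pos (n : ℕ) : 0 < tp n := Nat.pow_pos (by norm_num)

def ff (n i : ℕ) : ℕ :=
  if h : n = 0 then 0
  else if tp n - n ≤ i then tp n - 1 - i else ff (tp n - n) i
  termination_by n
  decreasing_by
    have := tp_lt (Nat.one_le_iff_ne_zero.mpr h)
    omega

example : ff 5 0 = 0 ∧ ff 5 1 = 2 ∧ ff 5 2 = 1 ∧ ff 5 3 = 4 ∧ ff 5 4 = 3 := by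
  have c5 : Nat.clog 2 5 = 3 := by
    rw [Nat.clog_of_two_le (by norm_num) (by norm_num), Nat.clog_of_two_le (by norm_num) (by norm_num),
      Nat.clog_of_two_le (by norm_num) (by norm_num), Nat.clog_one_right]
  have c3 : Nat.clog 2 3 = 2 := by
    rw [Nat.clog_of_two_le (by norm_num) (by norm_num), Nat.clog_of_two_le (by norm_num) (by norm_num),
      Nat.clog_one_right]
  refine ⟨?_, ?_, ?_, ?_, ?_⟩ <;> rw [ff] <;> simp [tp, c5] <;> rw [ff] <;> simp [tp, c3]
  rw [ff]; simp [tp, Nat.clog_one_right]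

lemma pow2_window {K k v : ℕ} (h1 : 2 ^ K ≤ v) (h2 : v < 2 * 2 ^ K) (hv : v = 2 ^ k) :
    v = 2 ^ K := by
  subst hv
  have hK : k = K := by
    have h3 : 2 ^ k < 2 ^ (K + 1) := by rw [pow_succ]; omega
    have h4 : k < K + 1 := (Nat.pow_lt_pow_iff_right (by norm_num)).mp h3
    have h5 : K ≤ k := (Nat.pow_le_pow_iff_right (by norm_num)).mp h1
    omega
  rw [hK]

lemma pow2_window2 {K k v : ℕ} (h1 : 2 ^ K < 2 * v) (h2 : v < 2 ^ K) (hv : v = 2 ^ k) :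
    False := by
  subst hv
  have h3 : 2 ^ K < 2 ^ (k + 1) := by rw [pow_succ]; omega
  have h4 : K < k + 1 := (Nat.pow_lt_pow_iff_right (by norm_num)).mp h3
  have h5 : k < K := (Nat.pow_lt_pow_iff_right (by norm_num)).mp h2
  omega

lemma tp_pow (n : ℕ) : tp n = 2 ^ Nat.clog 2 n := rfl

lemma block {n : ℕ} (hn : 0 < n) (g : ℕ → ℕ)
    (hlt : ∀ i, i < n → g i < n)
    (hinj : ∀ i j, i < n → j < n → g i = g j → i = j)
    (hsur : ∀ v, v < n → ∃ p, p < n ∧ g p = v)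
    (hgood : ∀ i, i < n → ∃ k, i + g i + 1 = 2 ^ k) :
    ∀ c i, i < n → n ≤ i + 1 + c → tp n - n ≤ i →
      g i = tp n - 1 - i ∧ g (tp n - 1 - i) = i := by
  intro c
  induction c using Nat.strong_induction_on with
  | _ c IH =>
  intro i hi hic hti
  have ht1 : n ≤ tp n := tp_ge n
  have ht2 : tp n < 2 * n := tp_lt hn
  set t := tp n with htdef
  have hteq : t = 2 ^ Nat.clog 2 n := rfl
  have H : ∀ i', i < i' → i' < n → g i' = t - 1 - i' ∧ g (t - 1 - i') = i' := by
    intro i' h1 h2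
    exact IH (n - 1 - i') (by omega) i' h2 (by omega) (by omega)
  rcases Nat.lt_or_ge (i + i + 1) t with hcase | hcase
  · -- easy case: i < t-1-i
    have h1 : i < t - 1 - i := by omega
    have h2 : t - 1 - i < n := by omega
    obtain ⟨e1, e2⟩ := H (t - 1 - i) h1 h2
    have : t - 1 - (t - 1 - i) = i := by omega
    rw [this] at e1 e2
    exact ⟨e2, e1⟩
  · -- hard case: t-1-i ≤ i
    constructor
    · obtain ⟨k, hk⟩ := hgood i hi
      set j := g i with hj
      have hjn : j < n := hlt i hi
      have notA : ¬ (t - n ≤ j ∧ j < t - 1 - i) := by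
        rintro ⟨ha, hb⟩
        have h1 : i < t - 1 - j := by omega
        have h2 : t - 1 - j < n := by omega
        have e := (H (t - 1 - j) h1 h2).1
        have : t - 1 - (t - 1 - j) = j := by omega
        rw [this] at e
        have := hinj i (t - 1 - j) hi h2 (by rw [e])
        omega
      have notB : ¬ (i < j ∧ j < n) := by
        rintro ⟨ha, hb⟩
        have e := (H j ha hb).2
        have := hinj i (t - 1 - j) hi (by omega) (by rw [e])
        omega
      rcases Nat.lt_or_ge j (t - n) with hc | hc
      · exfalso
        exact pow2_window2 (K := Nat.clog 2 n) (v := i + j + 1) (by omega) (by omega) hk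
      · have hge : t - 1 - i ≤ j := by omega
        have := pow2_window (K := Nat.clog 2 n) (v := i + j + 1) (by omega) (by omega) hk
        omega
    · obtain ⟨p, hp, hgp⟩ := hsur i hi
      obtain ⟨k, hk⟩ := hgood p hp
      rw [hgp] at hk
      have notB' : ¬ (i < p ∧ p < n) := by
        rintro ⟨ha, hb⟩
        have e := (H p ha hb).1
        omega
      have notA' : ¬ (t - n ≤ p ∧ p < t - 1 - i) := by
        rintro ⟨ha, hb⟩
        have h1 : i < t - 1 - p := by omega
        have h2 : t - 1 - p < n := by omega
        have e := (H (t - 1 - p) h1 h2).2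
        have : t - 1 - (t - 1 - p) = p := by omega
        rw [this] at e
        omega
      rcases Nat.lt_or_ge p (t - n) with hc | hc
      · exfalso
        exact pow2_window2 (K := Nat.clog 2 n) (v := p + i + 1) (by omega) (by omega) hk
      · have hge : t - 1 - i ≤ p := by omega
        have := pow2_window (K := Nat.clog 2 n) (v := p + i + 1) (by omega) (by omega) hk
        have : p = t - 1 - i := by omega
        rw [← this]
        exact hgp

lemma ff_block {n i : ℕ} (hn : n ≠ 0) (h : tp n - n ≤ i) : ff n i = tp n - 1 - i := by
  rw [ff]; simp [hn, h]

lemma ff_rec {n i : ℕ} (hn : n ≠ 0) (h : i < tp n - n) : ff n i = ff (tp n - n) i := by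
  rw [ff]; simp [hn, if_neg (by omega : ¬ tp n - n ≤ i)]
  intro hx; exact absurd hx (by omega)

lemma ff_main : ∀ n, ∀ i, i < n →
    ff n i < n ∧ ff n (ff n i) = i ∧ ∃ k, i + ff n i + 1 = 2 ^ k := by
  intro n
  induction n using Nat.strong_induction_on with
  | _ n IH =>
  intro i hi
  have hn : n ≠ 0 := by omega
  have ht1 : n ≤ tp n := tp_ge n
  have ht2 : tp n < 2 * n := tp_lt (by omega)
  rcases Nat.lt_or_ge i (tp n - n) with hc | hc
  · have hrec : ff n i = ff (tp n - n) i := by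
      rw [ff]; simp [hn]; omega
    have hm : tp n - n < n := by omega
    obtain ⟨h1, h2, h3⟩ := IH (tp n - n) hm i hc
    refine ⟨by omega, ?_, by rwa [hrec]⟩
    rw [hrec]
    have hrec2 : ff n (ff (tp n - n) i) = ff (tp n - n) (ff (tp n - n) i) := by
      rw [ff]; simp [hn]; omega
    rw [hrec2, h2]
  · have hval : ff n i = tp n - 1 - i := by
      rw [ff]; simp [hn]; omega
    have hlt : tp n - 1 - i < n := by omega
    have hc2 : tp n - n ≤ tp n - 1 - i := by omega
    have hval2 : ff n (tp n - 1 - i) = tp n - 1 - (tp n - 1 - i) := by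
      rw [ff]; simp [hn]; omega
    refine ⟨by omega, ?_, ⟨Nat.clog 2 n, ?_⟩⟩
    · rw [hval, hval2]; omega
    · rw [hval, tp_pow] at *; omega

lemma ff_lt {n i : ℕ} (h : i < n) : ff n i < n := (ff_main n i h).1
lemma ff_invol {n i : ℕ} (h : i < n) : ff n (ff n i) = i := (ff_main n i h).2.1
lemma ff_good {n i : ℕ} (h : i < n) : ∃ k, i + ff n i + 1 = 2 ^ k := (ff_main n i h).2.2

lemma ff_uniq : ∀ n (g : ℕ → ℕ),
    (∀ i, i < n → g i < n) →
    (∀ i j, i < n → j < n → g i = g j → i = j) →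
    (∀ i, i < n → ∃ k, i + g i + 1 = 2 ^ k) →
    ∀ i, i < n → g i = ff n i := by
  intro n
  induction n using Nat.strong_induction_on with
  | _ n IH =>
  intro g hlt hinj hgood i hi
  have hn : 0 < n := by omega
  have ht1 : n ≤ tp n := tp_ge n
  have ht2 : tp n < 2 * n := tp_lt hn
  -- surjectivity
  have hsur : ∀ v, v < n → ∃ p, p < n ∧ g p = v := by
    intro v hv
    have := Finset.surj_on_of_inj_on_of_card_le (s := Finset.range n) (t := Finset.range n)
      (f := fun a _ => g a)
      (fun a ha => Finset.mem_range.mpr (hlt a (Finset.mem_range.mp ha)))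
      (fun a b ha hb hab => hinj a b (Finset.mem_range.mp ha) (Finset.mem_range.mp hb) hab)
      le_rfl v (Finset.mem_range.mpr hv)
    obtain ⟨p, hp, hpv⟩ := this
    exact ⟨p, Finset.mem_range.mp hp, hpv.symm⟩
  have hblock := block hn g hlt hinj hsur hgood
  rcases Nat.lt_or_ge i (tp n - n) with hc | hc
  · -- recursive case
    have hm : tp n - n < n := by omega
    have hlt' : ∀ j, j < tp n - n → g j < tp n - n := by
      intro j hj
      have hv : g j < n := hlt j (by omega)
      by_contra hge
      push_neg at hge
      set v := g j with hvdef
      have h1 : tp n - n ≤ tp n - 1 - v := by omega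
      have h2 : tp n - 1 - v < n := by omega
      have e := (hblock (n - 1 - (tp n - 1 - v)) (tp n - 1 - v) h2 (by omega) h1).1
      have : tp n - 1 - (tp n - 1 - v) = v := by omega
      rw [this] at e
      have := hinj j (tp n - 1 - v) (by omega) h2 (by rw [e])
      omega
    have := IH (tp n - n) hm g hlt'
      (fun a b ha hb hab => hinj a b (by omega) (by omega) hab)
      (fun a ha => hgood a (by omega)) i hc
    rwa [ff_rec (by omega) hc]
  · exact (hblock (n - 1 - i) i hi (by omega) hc).1.trans (ff_block (by omega) hc).symm

lemma dsum_all : ∀ K : ℕ, (Nat.digits 2 (2 ^ K - 1)).sum = K := by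
  intro K
  induction K with
  | zero => simp
  | succ K IH =>
    have h1 : (0:ℕ) < 2 ^ (K+1) - 1 := by
      have := Nat.one_lt_two_pow_iff (n := K + 1) |>.mpr (by omega)
      omega
    rw [Nat.digits_def' (by norm_num : 1 < 2) h1]
    have h2 : (2 ^ (K+1) - 1) % 2 = 1 := by
      have : 2 ^ (K+1) = 2 * 2 ^ K := by ring
      omega
    have h3 : (2 ^ (K+1) - 1) / 2 = 2 ^ K - 1 := by
      have : 2 ^ (K+1) = 2 * 2 ^ K := by ring
      omega
    rw [h2, h3]
    simp [IH]
    omega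

lemma dsum_compl : ∀ K j : ℕ, j < 2 ^ K →
    (Nat.digits 2 j).sum + (Nat.digits 2 (2 ^ K - 1 - j)).sum = K := by
  intro K
  induction K with
  | zero => intro j hj; interval_cases j; simp
  | succ K IH =>
    intro j hj
    have hpow : 2 ^ (K+1) = 2 * 2 ^ K := by ring
    rcases Nat.eq_zero_or_pos j with h0 | hpos
    · subst h0; simpa using dsum_all (K+1)
    rcases Nat.lt_or_ge j (2 ^ (K+1) - 1) with hlt | hge
    · have hc : (0:ℕ) < 2 ^ (K+1) - 1 - j := by omega
      rw [Nat.digits_def' (by norm_num : 1 < 2) hpos,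
          Nat.digits_def' (by norm_num : 1 < 2) hc]
      have e1 : (2 ^ (K+1) - 1 - j) % 2 = 1 - j % 2 := by omega
      have e2 : (2 ^ (K+1) - 1 - j) / 2 = 2 ^ K - 1 - j / 2 := by omega
      rw [e1, e2]
      have := IH (j / 2) (by omega)
      simp only [List.sum_cons]
      omega
    · have hje : j = 2 ^ (K+1) - 1 := by omega
      subst hje
      have e : 2 ^ (K+1) - 1 - (2 ^ (K+1) - 1) = 0 := by omega
      rw [e]
      simpa using dsum_all (K+1)

lemma sum_Ico_dsum {a b K : ℕ} (hab : a + b = 2 ^ K) (hb : b ≤ 2 ^ K) :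
    2 * ∑ j ∈ Finset.Ico a b, (Nat.digits 2 j).sum = K * (b - a) := by
  have hrev : ∑ j ∈ Finset.Ico a b, (Nat.digits 2 j).sum
      = ∑ j ∈ Finset.Ico a b, (Nat.digits 2 (2 ^ K - 1 - j)).sum := by
    apply Finset.sum_nbij' (i := fun j => 2 ^ K - 1 - j) (j := fun j => 2 ^ K - 1 - j)
    all_goals intro x hx; simp only [Finset.mem_Ico] at *
    · omega
    · omega
    · omega
    · omega
    · have e : 2 ^ K - 1 - (2 ^ K - 1 - x) = x := by omega
      rw [e]
  have : 2 * ∑ j ∈ Finset.Ico a b, (Nat.digits 2 j).sum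
      = ∑ j ∈ Finset.Ico a b, ((Nat.digits 2 j).sum + (Nat.digits 2 (2 ^ K - 1 - j)).sum) := by
    rw [Finset.sum_add_distrib, ← hrev]; ring
  rw [this, Finset.sum_congr rfl (fun j hj => dsum_compl K j (by
    simp only [Finset.mem_Ico] at hj; omega))]
  simp [mul_comm]

lemma sumlog : ∀ n, ∑ i ∈ Finset.range n, Nat.log 2 (i + ff n i + 1)
    = 2 * ∑ j ∈ Finset.range n, (Nat.digits 2 j).sum := by
  intro n
  induction n using Nat.strong_induction_on with
  | _ n IH =>
  rcases Nat.eq_zero_or_pos n with h0 | hn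
  · subst h0; simp
  have ht1 : n ≤ tp n := tp_ge n
  have ht2 : tp n < 2 * n := tp_lt hn
  set m := tp n - n with hm
  have hsplit : ∀ g : ℕ → ℕ, ∑ i ∈ Finset.range n, g i
      = ∑ i ∈ Finset.range m, g i + ∑ i ∈ Finset.Ico m n, g i := by
    intro g
    rw [Finset.range_eq_Ico, ← Finset.sum_Ico_consecutive _ (Nat.zero_le m) (by omega : m ≤ n),
      ← Finset.range_eq_Ico]
  rw [hsplit, hsplit]
  have e1 : ∑ i ∈ Finset.range m, Nat.log 2 (i + ff n i + 1)
      = 2 * ∑ j ∈ Finset.range m, (Nat.digits 2 j).sum := by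
    rw [← IH m (by omega)]
    apply Finset.sum_congr rfl
    intro i hi
    rw [ff_rec (by omega) (by simp only [Finset.mem_range] at hi; omega)]
  have e2 : ∑ i ∈ Finset.Ico m n, Nat.log 2 (i + ff n i + 1)
      = Nat.clog 2 n * (n - m) := by
    have : ∀ i ∈ Finset.Ico m n, Nat.log 2 (i + ff n i + 1) = Nat.clog 2 n := by
      intro i hi
      simp only [Finset.mem_Ico] at hi
      rw [ff_block (by omega) hi.1]
      have : i + (tp n - 1 - i) + 1 = tp n := by omega
      rw [this, tp_pow, Nat.log_pow (by norm_num)]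
    rw [Finset.sum_congr rfl this]
    simp [mul_comm]
  have e3 : 2 * ∑ j ∈ Finset.Ico m n, (Nat.digits 2 j).sum = Nat.clog 2 n * (n - m) := by
    apply sum_Ico_dsum
    · rw [← tp_pow]; omega
    · rw [← tp_pow]; omega
  rw [e1, e2]
  omega

open Equiv Equiv.Perm in
lemma rev_succ_decomp (n : ℕ) :
    (Fin.revPerm : Perm (Fin (n + 1))) =
      finRotate (n + 1) * (finSuccEquivLast.symm.permCongr (Fin.revPerm (n := n)).optionCongr) := by
  ext i
  refine Fin.lastCases ?_ (fun x => ?_) i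
  · simp [Equiv.permCongr_apply, Fin.rev_last]
  · simp [Equiv.permCongr_apply, Fin.rev_castSucc, Fin.coeSucc_eq_succ]

open Equiv Equiv.Perm in
lemma sign_rev (n : ℕ) :
    Equiv.Perm.sign (Fin.revPerm : Perm (Fin n)) = (-1) ^ (n.choose 2) := by
  induction n with
  | zero =>
    have : (Fin.revPerm : Perm (Fin 0)) = 1 := Subsingleton.elim _ _
    simp [this]
  | succ n IH =>
    rw [rev_succ_decomp n, map_mul, sign_finRotate, Equiv.Perm.sign_permCongr,
      Equiv.optionCongr_sign, IH]
    have : (n + 1).choose 2 = n.choose 2 + n := by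
      have h := Nat.choose_succ_succ n 1
      simp only [Nat.choose_one_right] at h
      rw [h]; exact Nat.add_comm _ _
    rw [this, pow_add]
    exact mul_comm _ _

def sperm (n : ℕ) : Equiv.Perm (Fin n) where
  toFun i := ⟨ff n i, ff_lt i.2⟩
  invFun i := ⟨ff n i, ff_lt i.2⟩
  left_inv i := by
    apply Fin.ext
    exact ff_invol i.2
  right_inv i := by
    apply Fin.ext
    exact ff_invol i.2

lemma sperm_apply {n : ℕ} (i : Fin n) : (sperm n i : ℕ) = ff n i := rfl

lemma choose_two_add (m r : ℕ) : (m + r).choose 2 = m.choose 2 + r.choose 2 + m * r := by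
  induction r with
  | zero => simp
  | succ r IH =>
    have h1 := Nat.choose_succ_succ (m + r) 1
    have h2 := Nat.choose_succ_succ r 1
    simp only [Nat.choose_one_right] at h1 h2
    have e1 : m + (r + 1) = (m + r) + 1 := by omega
    rw [e1, h1, h2, IH]
    ring

lemma neg_one_pow_choose_add {m r : ℕ} (h : Even (m * r)) :
    ((-1 : ℤˣ)) ^ ((m + r).choose 2) = (-1) ^ (m.choose 2) * (-1) ^ (r.choose 2) := by
  rw [choose_two_add, pow_add, pow_add, h.neg_one_pow, mul_one]

open Equiv Equiv.Perm in
lemma sperm_decomp {n : ℕ} (hn : 2 ≤ n) :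
    sperm n = (Equiv.permCongr (finSumFinEquiv.trans (finCongr (by
        have := tp_ge n; have := tp_lt (by omega : 1 ≤ n); omega :
        (tp n - n) + (n - (tp n - n)) = n)))
      (Equiv.sumCongr (sperm (tp n - n)) (Fin.revPerm : Perm (Fin (n - (tp n - n)))))) := by
  have ht1 : n ≤ tp n := tp_ge n
  have ht2 : tp n < 2 * n := tp_lt (by omega)
  set m := tp n - n with hm
  set r := n - m with hr
  ext i
  rcases Nat.lt_or_ge (i : ℕ) m with hc | hc
  · have hsymm : (finSumFinEquiv.trans (finCongr (by omega : m + r = n))).symm i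
        = Sum.inl ⟨(i : ℕ), hc⟩ := by
      rw [Equiv.symm_apply_eq]
      apply Fin.ext
      simp
    simp only [Equiv.permCongr_apply, hsymm, Equiv.sumCongr_apply, Sum.map_inl,
      Equiv.trans_apply, finSumFinEquiv_apply_left, finCongr_apply]
    simp [sperm_apply, Fin.coe_cast, Fin.coe_castAdd,
      ff_rec (by omega : n ≠ 0) (by omega : (i:ℕ) < tp n - n)]
  · have hsymm : (finSumFinEquiv.trans (finCongr (by omega : m + r = n))).symm i
        = Sum.inr ⟨(i : ℕ) - m, by omega⟩ := by
      rw [Equiv.symm_apply_eq]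
      apply Fin.ext
      simp
      omega
    simp only [Equiv.permCongr_apply, hsymm, Equiv.sumCongr_apply, Sum.map_inr,
      Equiv.trans_apply, finSumFinEquiv_apply_right, finCongr_apply]
    simp only [sperm_apply, Fin.coe_cast, Fin.coe_natAdd, Fin.natAdd_mk, Fin.revPerm_apply,
      Fin.val_rev]
    rw [ff_block (by omega : n ≠ 0) (by omega : tp n - n ≤ (i : ℕ))]
    omega

open Equiv Equiv.Perm in
lemma sign_sperm : ∀ n, Equiv.Perm.sign (sperm n) = (-1) ^ (n.choose 2) := by
  intro n
  induction n using Nat.strong_induction_on with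
  | _ n IH =>
  rcases Nat.lt_or_ge n 2 with h2 | h2
  · interval_cases n
    · have : sperm 0 = 1 := Subsingleton.elim _ _
      simp [this]
    · have : sperm 1 = 1 := Subsingleton.elim _ _
      simp [this]
  · have ht1 : n ≤ tp n := tp_ge n
    have ht2 : tp n < 2 * n := tp_lt (by omega)
    set m := tp n - n with hm
    set r := n - m with hr
    have hrev : Even r := by
      have hK : 0 < Nat.clog 2 n := Nat.clog_pos (by norm_num) h2
      have hdvd : 2 ∣ tp n := by
        rw [tp_pow]
        exact dvd_pow_self 2 (by omega)
      obtain ⟨c, hc⟩ := hdvd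
      exact ⟨n - c, by omega⟩
    rw [sperm_decomp h2, Equiv.Perm.sign_permCongr, Equiv.Perm.sign_sumCongr,
      IH m (by omega), sign_rev]
    rw [← neg_one_pow_choose_add (Even.mul_left hrev m)]
    have hmr : m + r = n := by omega
    rw [hmr]

open Polynomial in
open Classical in
noncomputable def bSeq (n : ℕ) : Polynomial ℤ :=
  if ∃ k : ℕ, n + 1 = 2 ^ k then X ^ (Nat.log 2 (n + 1)) else 0

open Polynomial in
lemma bSeq_ne {m : ℕ} (h : bSeq m ≠ 0) : ∃ k, m + 1 = 2 ^ k := by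
  by_contra hc
  rw [bSeq, if_neg hc] at h
  exact h rfl

open Polynomial in
lemma bSeq_val {m : ℕ} (h : ∃ k, m + 1 = 2 ^ k) :
    bSeq m = X ^ (Nat.log 2 (m + 1)) := by
  rw [bSeq, if_pos h]

open Polynomial in
theorem stmt16 (n : ℕ) :
    Matrix.det (Matrix.of fun i j : Fin n => bSeq ((i : ℕ) + j)) =
      (-1 : Polynomial ℤ) ^ (n.choose 2) *
        X ^ (2 * ∑ j ∈ Finset.range n, (Nat.digits 2 j).sum) := by
  rw [Matrix.det_apply']
  rw [Finset.sum_eq_single_of_mem (sperm n) (Finset.mem_univ _)]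
  · -- value of the main term
    have hprod : ∏ i : Fin n, (Matrix.of fun i j : Fin n => bSeq ((i : ℕ) + j)) (sperm n i) i
        = X ^ (2 * ∑ j ∈ Finset.range n, (Nat.digits 2 j).sum) := by
      have hfac : ∀ i : Fin n, (Matrix.of fun i j : Fin n => bSeq ((i : ℕ) + j)) (sperm n i) i
          = X ^ (Nat.log 2 ((i : ℕ) + ff n (i : ℕ) + 1)) := by
        intro i
        have hg := ff_good i.2
        have harg : ((sperm n i : ℕ) + (i : ℕ)) + 1 = (i : ℕ) + ff n (i : ℕ) + 1 := by
          rw [sperm_apply]; omega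
        simp only [Matrix.of_apply]
        rw [bSeq_val (by rw [harg]; exact hg), harg]
      rw [Finset.prod_congr rfl (fun i _ => hfac i), Finset.prod_pow_eq_pow_sum]
      congr 1
      rw [← sumlog n, ← Fin.sum_univ_eq_sum_range fun i => Nat.log 2 (i + ff n i + 1)]
    rw [hprod, sign_sperm n]
    push_cast
    rfl
  · -- all other permutations give zero
    intro τ _ hτ
    have hzero : ∏ i : Fin n, (Matrix.of fun i j : Fin n => bSeq ((i : ℕ) + j)) (τ i) i = 0 := by
      by_contra hne
      apply hτ
      have hfac : ∀ i : Fin n, bSeq ((τ i : ℕ) + (i : ℕ)) ≠ 0 := by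
        intro i hzero'
        exact hne (Finset.prod_eq_zero (Finset.mem_univ i) hzero')
      set g : ℕ → ℕ := fun x => if h : x < n then ((τ ⟨x, h⟩ : Fin n) : ℕ) else 0 with hg
      have hgapp : ∀ x (h : x < n), g x = (τ ⟨x, h⟩ : ℕ) := by
        intro x h; simp [hg, h]
      have huniq := ff_uniq n g
        (fun i hi => by rw [hgapp i hi]; exact (τ ⟨i, hi⟩).2)
        (fun a b ha hb hab => by
          rw [hgapp a ha, hgapp b hb] at hab
          have := τ.injective (Fin.ext hab)
          exact Fin.mk.inj_iff.mp this)
        (fun i hi => by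
          rw [hgapp i hi]
          obtain ⟨k, hk⟩ := bSeq_ne (hfac ⟨i, hi⟩)
          simp only [Fin.val_mk] at hk
          exact ⟨k, by omega⟩)
      ext i
      have := huniq (i : ℕ) i.2
      rw [hgapp (i : ℕ) i.2] at this
      simp only [Fin.eta] at this
      rw [← sperm_apply] at this
      exact this ▸ rfl
    rw [hzero, mul_zero]
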